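/- arXiv:1211.3041 — 8 statements merged into one kernel-verified Lean document; each statement's English description precedes it below -/
import Mathlib

section
/- Let (X,d) be a metric space, S ⊆ X a nonempty subset, D ≥ 1 a real number, and ρ : S × S → [0,∞) an ultrametric on S satisfying d(x,y) ≤ ρ(x,y) ≤ D·d(x,y) for all x,y ∈ S. Assume that every point y ∈ X has a nearest point in S (i.e., there exists N(y) ∈ S with d(y,N(y)) = inf_{x∈S} d(x,y)). Then there exists an ultrametric ρ̄ : X × X → [0,∞) such that: (1) ρ̄(x,y) = ρ(x,y) for all x,y ∈ S; (2) ρ̄(x,y) ≥ (D/(D+1))·d(x,y) for all x,y ∈ X; and (3) (2D/(2D+1))·d(x,y) ≤ ρ̄(x,y) ≤ 2D·d(x,y) for all x ∈ S and y ∈ X. -/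
/-- Extension of an approximate ultrametric from a subset `S` of a metric
space `X` to all of `X`, assuming every point of `X` has a nearest point in `S`. -/
theorem ultrametric_extension
    {X : Type*} [MetricSpace X] (S : Set X) (hS : S.Nonempty)
    (D : ℝ) (hD : 1 ≤ D) (ρ : X → X → ℝ)
    -- ρ is a metric on S:
    (hρ_nonneg : ∀ x ∈ S, ∀ y ∈ S, 0 ≤ ρ x y)
    (hρ_eq : ∀ x ∈ S, ∀ y ∈ S, (ρ x y = 0 ↔ x = y))
    (hρ_symm : ∀ x ∈ S, ∀ y ∈ S, ρ x y = ρ y x)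
    -- ρ satisfies the strong triangle inequality on S (so it is an ultrametric on S):
    (hρ_ultra : ∀ x ∈ S, ∀ y ∈ S, ∀ z ∈ S, ρ x z ≤ max (ρ x y) (ρ y z))
    -- ρ is sandwiched between d and D·d on S:
    (hρ_lower : ∀ x ∈ S, ∀ y ∈ S, dist x y ≤ ρ x y)
    (hρ_upper : ∀ x ∈ S, ∀ y ∈ S, ρ x y ≤ D * dist x y)
    -- every point of X has a nearest point in S:
    (hnear : ∀ y : X, ∃ n ∈ S, dist y n = Metric.infDist y S) :
    ∃ ρ' : X → X → ℝ,
      -- ρ' is an ultrametric on X: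
      (∀ x y : X, 0 ≤ ρ' x y) ∧
      (∀ x y : X, (ρ' x y = 0 ↔ x = y)) ∧
      (∀ x y : X, ρ' x y = ρ' y x) ∧
      (∀ x y z : X, ρ' x z ≤ max (ρ' x y) (ρ' y z)) ∧
      -- (1) ρ' extends ρ:
      (∀ x ∈ S, ∀ y ∈ S, ρ' x y = ρ x y) ∧
      -- (2) lower bound on all pairs:
      (∀ x y : X, (D / (D + 1)) * dist x y ≤ ρ' x y) ∧
      -- (3) two-sided bound on pairs from S × X:
      (∀ x ∈ S, ∀ y : X,
        (2 * D / (2 * D + 1)) * dist x y ≤ ρ' x y ∧ ρ' x y ≤ 2 * D * dist x y) := by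
  classical
  choose N hNmem hNdist using hnear
  have hNS : ∀ x ∈ S, N x = x := by
    intro x hx
    have h := hNdist x
    rw [Metric.infDist_zero_of_mem hx] at h
    exact (dist_eq_zero.mp h).symm
  have hNd : ∀ y : X, ∀ s ∈ S, dist y (N y) ≤ dist y s := by
    intro y s hs
    rw [hNdist y]
    exact Metric.infDist_le_dist_of_mem hs
  have hD0 : (0:ℝ) < D := lt_of_lt_of_le one_pos hD
  set ρ' : X → X → ℝ := fun x y => if x = y then 0 else
    max (ρ (N x) (N y)) (max (2*D*dist x (N x)) (2*D*dist y (N y))) with hρ'def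
  have hself : ∀ x, ρ' x x = 0 := fun x => by simp [hρ'def]
  have l1 : ∀ x y, x ≠ y → ρ (N x) (N y) ≤ ρ' x y := by
    intro x y h; simp only [hρ'def, if_neg h]; exact le_max_left _ _
  have l2 : ∀ x y, x ≠ y → 2*D*dist x (N x) ≤ ρ' x y := by
    intro x y h; simp only [hρ'def, if_neg h]
    exact le_max_of_le_right (le_max_left _ _)
  have l3 : ∀ x y, x ≠ y → 2*D*dist y (N y) ≤ ρ' x y := by
    intro x y h; simp only [hρ'def, if_neg h]
    exact le_max_of_le_right (le_max_right _ _)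
  have l4 : ∀ x y, x ≠ y → dist (N x) (N y) ≤ ρ' x y := fun x y h =>
    le_trans (hρ_lower _ (hNmem x) _ (hNmem y)) (l1 x y h)
  have nonneg : ∀ x y, 0 ≤ ρ' x y := by
    intro x y
    by_cases h : x = y
    · rw [h, hself]
    · exact le_trans (by positivity) (l2 x y h)
  have lower2 : ∀ x y, (D / (D + 1)) * dist x y ≤ ρ' x y := by
    intro x y
    by_cases h : x = y
    · simp [h, hself]
    · have h1 := l2 x y h
      have h2 := l3 x y h
      have h3 := l4 x y h
      have htri : dist x y ≤ dist x (N x) + dist (N x) (N y) + dist (N y) y :=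
        dist_triangle4 x (N x) (N y) y
      have hcomm : dist (N y) y = dist y (N y) := dist_comm _ _
      rw [div_mul_eq_mul_div, div_le_iff₀ (by linarith : (0:ℝ) < D + 1)]
      nlinarith [nonneg x y, dist_nonneg (x := x) (y := y)]
  refine ⟨ρ', nonneg, ?_, ?_, ?_, ?_, lower2, ?_⟩
  · -- eq zero iff
    intro x y
    constructor
    · intro h0
      by_contra h
      have hd : 0 < dist x y := dist_pos.mpr h
      have := lower2 x y
      rw [h0] at this
      have hq : 0 < D / (D + 1) := by positivity
      nlinarith
    · intro h; rw [h, hself]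
  · -- symm
    intro x y
    by_cases h : x = y
    · rw [h]
    · simp only [hρ'def, if_neg h, if_neg (Ne.symm h)]
      rw [hρ_symm _ (hNmem x) _ (hNmem y), max_comm (2*D*dist x (N x))]
  · -- ultra
    intro x y z
    by_cases hxz : x = z
    · rw [hxz, hself]
      exact le_max_of_le_left (nonneg z y)
    by_cases hxy : x = y
    · rw [hxy]; exact le_max_right _ _
    by_cases hyz : y = z
    · rw [← hyz]; exact le_max_left _ _
    simp only [hρ'def, if_neg hxz]
    refine max_le ?_ (max_le ?_ ?_)
    · calc ρ (N x) (N z) ≤ max (ρ (N x) (N y)) (ρ (N y) (N z)) :=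
            hρ_ultra _ (hNmem x) _ (hNmem y) _ (hNmem z)
        _ ≤ max (ρ' x y) (ρ' y z) := max_le_max (l1 x y hxy) (l1 y z hyz)
    · exact le_max_of_le_left (l2 x y hxy)
    · exact le_max_of_le_right (l3 y z hyz)
  · -- extension
    intro x hx y hy
    by_cases h : x = y
    · rw [h, hself, ((hρ_eq y hy y hy).mpr rfl)]
    · simp only [hρ'def, if_neg h, hNS x hx, hNS y hy, dist_self, mul_zero]
      simp [hρ_nonneg x hx y hy]
  · -- (3)
    intro x hx y
    by_cases h : x = y
    · constructor
      · simp [h, hself]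
      · rw [h, hself, dist_self, mul_zero]
    · have hNx := hNS x hx
      have hup1 : ρ x (N y) ≤ D * dist x (N y) := hρ_upper x hx _ (hNmem y)
      have hlo1 : dist x (N y) ≤ ρ x (N y) := hρ_lower x hx _ (hNmem y)
      have htri1 : dist x (N y) ≤ dist x y + dist y (N y) := dist_triangle x y (N y)
      have hnear : dist y (N y) ≤ dist y x := hNd y x hx
      have hcomm : dist y x = dist x y := dist_comm _ _
      constructor
      · have h1 := l1 x y h
        rw [hNx] at h1
        have h3 := l3 x y h
        have htri2 : dist x y ≤ dist x (N y) + dist (N y) y := dist_triangle _ _ _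
        have hcomm2 : dist (N y) y = dist y (N y) := dist_comm _ _
        rw [div_mul_eq_mul_div, div_le_iff₀ (by linarith : (0:ℝ) < 2*D + 1)]
        nlinarith [nonneg x y]
      · simp only [hρ'def, if_neg h, hNx, dist_self, mul_zero]
        refine max_le ?_ (max_le ?_ ?_)
        · nlinarith
        · positivity
        · nlinarith
end

section
/- Let (X,d) be a metric space, S ⊆ X a nonempty subset, D ≥ 1 a real number, and ρ : S × S → [0,∞) an ultrametric on S satisfying d(x,y) ≤ ρ(x,y) ≤ D·d(x,y) for all x,y ∈ S. Assume every point y ∈ X has a nearest point in S. Then there exists an ultrametric ρ̄ : X × X → [0,∞) extending ρ that (2D+1)-approximates d on pairs from S × X; that is, there exists c > 0 such that d(x,y) ≤ c·ρ̄(x,y) ≤ (2D+1)·d(x,y) for all x ∈ S, y ∈ X. -/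
/-- There is an ultrametric on `X` extending `ρ` which `(2D+1)`-approximates
the metric `d` on pairs from `S × X`. -/
theorem ultrametric_extension_approx
    {X : Type*} [MetricSpace X] (S : Set X) (hS : S.Nonempty)
    (D : ℝ) (hD : 1 ≤ D) (ρ : X → X → ℝ)
    -- ρ is a metric on S:
    (hρ_nonneg : ∀ x ∈ S, ∀ y ∈ S, 0 ≤ ρ x y)
    (hρ_eq : ∀ x ∈ S, ∀ y ∈ S, (ρ x y = 0 ↔ x = y))
    (hρ_symm : ∀ x ∈ S, ∀ y ∈ S, ρ x y = ρ y x)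
    -- strong triangle inequality on S (so ρ is an ultrametric on S):
    (hρ_ultra : ∀ x ∈ S, ∀ y ∈ S, ∀ z ∈ S, ρ x z ≤ max (ρ x y) (ρ y z))
    -- ρ is sandwiched between d and D·d on S:
    (hρ_lower : ∀ x ∈ S, ∀ y ∈ S, dist x y ≤ ρ x y)
    (hρ_upper : ∀ x ∈ S, ∀ y ∈ S, ρ x y ≤ D * dist x y)
    -- every point of X has a nearest point in S:
    (hnear : ∀ y : X, ∃ n ∈ S, dist y n = Metric.infDist y S) :
    ∃ ρ' : X → X → ℝ,
      -- ρ' is an ultrametric on X: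
      (∀ x y : X, 0 ≤ ρ' x y) ∧
      (∀ x y : X, (ρ' x y = 0 ↔ x = y)) ∧
      (∀ x y : X, ρ' x y = ρ' y x) ∧
      (∀ x y z : X, ρ' x z ≤ max (ρ' x y) (ρ' y z)) ∧
      -- ρ' extends ρ:
      (∀ x ∈ S, ∀ y ∈ S, ρ' x y = ρ x y) ∧
      -- ρ' (2D+1)-approximates d on pairs from S × X:
      (∃ c : ℝ, 0 < c ∧ ∀ x ∈ S, ∀ y : X,
        dist x y ≤ c * ρ' x y ∧ c * ρ' x y ≤ (2 * D + 1) * dist x y) := by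
  classical
  choose n hnS hnd using hnear
  have hD0 : (0:ℝ) < 2 * D := by linarith
  -- nearest point facts
  have hnle : ∀ y : X, ∀ s ∈ S, dist y (n y) ≤ dist y s := by
    intro y s hs
    rw [hnd y]
    exact Metric.infDist_le_dist_of_mem hs
  have hnself : ∀ y ∈ S, n y = y := by
    intro y hy
    have h0 : dist y (n y) ≤ dist y y := hnle y y hy
    simp only [dist_self] at h0
    have := le_antisymm h0 dist_nonneg
    exact (dist_eq_zero.mp this).symm
  set ρ' : X → X → ℝ := fun x y =>
    if x = y then 0 else
      max (ρ (n x) (n y)) (max (2 * D * dist x (n x)) (2 * D * dist y (n y))) with hρ'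
  have hnonneg : ∀ x y : X, 0 ≤ ρ' x y := by
    intro x y
    by_cases h : x = y
    · simp [hρ', h]
    · simp only [hρ', if_neg h]
      have : 0 ≤ 2 * D * dist x (n x) := by positivity
      exact le_trans this (le_trans (le_max_left _ _) (le_max_right _ _))
  have hval : ∀ x y : X, x ≠ y →
      ρ' x y = max (ρ (n x) (n y)) (max (2 * D * dist x (n x)) (2 * D * dist y (n y))) := by
    intro x y h; simp [hρ', h]
  refine ⟨ρ', hnonneg, ?_, ?_, ?_, ?_, ?_⟩
  · -- eq zero iff
    intro x y
    constructor
    · intro h0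
      by_contra hxy
      rw [hval x y hxy] at h0
      have h1 : ρ (n x) (n y) ≤ 0 := h0 ▸ le_max_left _ _
      have h2 : 2 * D * dist x (n x) ≤ 0 :=
        h0 ▸ le_trans (le_max_left _ _) (le_max_right _ _)
      have h3 : 2 * D * dist y (n y) ≤ 0 :=
        h0 ▸ le_trans (le_max_right _ _) (le_max_right _ _)
      have hx0 : dist x (n x) = 0 := by
        nlinarith [dist_nonneg (x := x) (y := n x)]
      have hy0 : dist y (n y) = 0 := by
        nlinarith [dist_nonneg (x := y) (y := n y)]
      have hxn : x = n x := dist_eq_zero.mp hx0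
      have hyn : y = n y := dist_eq_zero.mp hy0
      have hlow : dist (n x) (n y) ≤ ρ (n x) (n y) := hρ_lower _ (hnS x) _ (hnS y)
      have : dist x y ≤ 0 := by rw [hxn, hyn]; linarith
      exact hxy (dist_le_zero.mp this)
    · intro h; simp [hρ', h]
  · -- symmetry
    intro x y
    by_cases h : x = y
    · simp [hρ', h]
    · rw [hval x y h, hval y x (Ne.symm h), hρ_symm _ (hnS x) _ (hnS y), max_comm (2 * D * dist x (n x))]
  · -- strong triangle
    intro x y z
    by_cases hxz : x = z
    · simp only [hρ', if_pos hxz]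
      exact le_trans (hnonneg x y) (le_max_left _ _)
    by_cases hxy : x = y
    · subst hxy; exact le_max_right _ _
    by_cases hyz : y = z
    · subst hyz; exact le_max_left _ _
    rw [hval x z hxz, hval x y hxy, hval y z hyz]
    refine max_le ?_ (max_le ?_ ?_)
    · calc ρ (n x) (n z) ≤ max (ρ (n x) (n y)) (ρ (n y) (n z)) :=
            hρ_ultra _ (hnS x) _ (hnS y) _ (hnS z)
        _ ≤ _ := max_le_max (le_max_left _ _) (le_max_left _ _)
    · exact le_trans (le_trans (le_max_left _ _) (le_max_right _ _)) (le_max_left _ _)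
    · exact le_trans (le_trans (le_max_right _ _) (le_max_right _ _)) (le_max_right _ _)
  · -- extension
    intro x hx y hy
    by_cases h : x = y
    · subst h
      have : ρ x x = 0 := (hρ_eq x hx x hx).mpr rfl
      simp [hρ', this]
    · rw [hval x y h, hnself x hx, hnself y hy]
      simp only [dist_self, mul_zero, max_self]
      exact max_eq_left (le_trans (by norm_num) (hρ_nonneg x hx y hy))
  · -- approximation
    refine ⟨(2 * D + 1) / (2 * D), by positivity, ?_⟩
    intro x hx y
    by_cases h : x = y
    · subst h; simp [hρ']
    have hxy := hval x y h
    rw [hnself x hx] at hxy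
    simp only [dist_self, mul_zero] at hxy
    set a := ρ x (n y) with ha
    set b := 2 * D * dist y (n y) with hb
    have hb0 : 0 ≤ b := by positivity
    have hr : ρ' x y = max a b := by rw [hxy, max_eq_right hb0]
    have hra : a ≤ ρ' x y := hr ▸ le_max_left _ _
    have hrb : b ≤ ρ' x y := hr ▸ le_max_right _ _
    have hyn : dist y (n y) ≤ dist y x := hnle y x hx
    -- lower bound: dist x y ≤ a + dist y (n y)
    have hlow : dist x y ≤ a + dist y (n y) := by
      calc dist x y ≤ dist x (n y) + dist (n y) y := dist_triangle _ _ _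
        _ ≤ a + dist y (n y) := by
            have := hρ_lower x hx (n y) (hnS y)
            rw [dist_comm (n y) y]; linarith
    -- upper bound: ρ' x y ≤ 2 D dist x y
    have hup : ρ' x y ≤ 2 * D * dist x y := by
      rw [hr]
      refine max_le ?_ ?_
      · have h1 : a ≤ D * dist x (n y) := hρ_upper x hx (n y) (hnS y)
        have h2 : dist x (n y) ≤ dist x y + dist y (n y) := dist_triangle _ _ _
        rw [dist_comm y x] at hyn
        nlinarith
      · rw [dist_comm y x] at hyn; nlinarith
    constructor
    · have hdyn : dist y (n y) ≤ ρ' x y / (2 * D) := by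
        rw [le_div_iff₀ hD0]; rw [hb] at hrb; linarith [hrb]
      have : dist x y ≤ ρ' x y + ρ' x y / (2 * D) := by linarith
      calc dist x y ≤ ρ' x y + ρ' x y / (2 * D) := this
        _ = (2 * D + 1) / (2 * D) * ρ' x y := by field_simp
    · rw [div_mul_eq_mul_div, div_le_iff₀ hD0]
      nlinarith [dist_nonneg (x := x) (y := y)]
end

section
/- Let (X,d) be a metric space, S ⊆ X a nonempty subset, D ≥ 1 a real number, ρ : S × S → [0,∞) an ultrametric on S satisfying d(x,y) ≤ ρ(x,y) ≤ D·d(x,y) for all x,y ∈ S, and N : X → S a map with N(x) = x for x ∈ S and d(y,N(y)) ≤ d(y,s) for every y ∈ X and s ∈ S. Define ρ̄(x,y) = max{2D·d(x,N(x)), 2D·d(y,N(y)), ρ(N(x),N(y))}. Then ρ̄ satisfies the strong triangle inequality: ρ̄(x,z) ≤ max{ρ̄(x,y), ρ̄(y,z)} for all x,y,z ∈ X. -/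
/-- The extension formula satisfies the strong triangle inequality. -/
theorem extension_strong_triangle
    {X : Type*} [MetricSpace X] (S : Set X) (hS : S.Nonempty)
    (D : ℝ) (hD : 1 ≤ D) (ρ : X → X → ℝ)
    -- ρ is a metric on S:
    (hρ_nonneg : ∀ x ∈ S, ∀ y ∈ S, 0 ≤ ρ x y)
    (hρ_eq : ∀ x ∈ S, ∀ y ∈ S, (ρ x y = 0 ↔ x = y))
    (hρ_symm : ∀ x ∈ S, ∀ y ∈ S, ρ x y = ρ y x)
    -- strong triangle inequality on S (so ρ is an ultrametric on S):
    (hρ_ultra : ∀ x ∈ S, ∀ y ∈ S, ∀ z ∈ S, ρ x z ≤ max (ρ x y) (ρ y z))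
    -- ρ is sandwiched between d and D·d on S:
    (hρ_lower : ∀ x ∈ S, ∀ y ∈ S, dist x y ≤ ρ x y)
    (hρ_upper : ∀ x ∈ S, ∀ y ∈ S, ρ x y ≤ D * dist x y)
    -- N is a nearest-point map onto S:
    (N : X → X) (hN_mem : ∀ x : X, N x ∈ S)
    (hN_id : ∀ x ∈ S, N x = x)
    (hN_min : ∀ y : X, ∀ s ∈ S, dist y (N y) ≤ dist y s)
    -- ρ' is the extension formula:
    (ρ' : X → X → ℝ)
    (hρ' : ∀ x y : X,
      ρ' x y = max (max (2 * D * dist x (N x)) (2 * D * dist y (N y))) (ρ (N x) (N y)))    :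
    ∀ x y z : X, ρ' x z ≤ max (ρ' x y) (ρ' y z) := by
  intro x y z
  rw [hρ' x z, hρ' x y, hρ' y z]
  apply max_le (max_le ?_ ?_) ?_
  · exact le_max_of_le_left (le_max_of_le_left (le_max_left _ _))
  · exact le_max_of_le_right (le_max_of_le_left (le_max_right _ _))
  · exact (hρ_ultra _ (hN_mem x) _ (hN_mem y) _ (hN_mem z)).trans
      (max_le_max (le_max_right _ _) (le_max_right _ _))
end

section
/- Let (X,d) be a metric space, S ⊆ X a nonempty subset, D ≥ 1 a real number, ρ : S × S → [0,∞) an ultrametric on S satisfying d(x,y) ≤ ρ(x,y) ≤ D·d(x,y) for all x,y ∈ S, and N : X → S a nearest-point map. Define ρ̄(x,y) = max{2D·d(x,N(x)), 2D·d(y,N(y)), ρ(N(x),N(y))}. Then ρ̄(x,y) ≥ (D/(D+1))·d(x,y) for all x,y ∈ X. -/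
/-- Lower bound ρ̄(x,y) ≥ (D/(D+1))·d(x,y) for all x, y ∈ X. -/
theorem extension_lower_bound_all
    {X : Type*} [MetricSpace X] (S : Set X) (hS : S.Nonempty)
    (D : ℝ) (hD : 1 ≤ D) (ρ : X → X → ℝ)
    -- ρ is a metric on S:
    (hρ_nonneg : ∀ x ∈ S, ∀ y ∈ S, 0 ≤ ρ x y)
    (hρ_eq : ∀ x ∈ S, ∀ y ∈ S, (ρ x y = 0 ↔ x = y))
    (hρ_symm : ∀ x ∈ S, ∀ y ∈ S, ρ x y = ρ y x)
    -- strong triangle inequality on S (so ρ is an ultrametric on S):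
    (hρ_ultra : ∀ x ∈ S, ∀ y ∈ S, ∀ z ∈ S, ρ x z ≤ max (ρ x y) (ρ y z))
    -- ρ is sandwiched between d and D·d on S:
    (hρ_lower : ∀ x ∈ S, ∀ y ∈ S, dist x y ≤ ρ x y)
    (hρ_upper : ∀ x ∈ S, ∀ y ∈ S, ρ x y ≤ D * dist x y)
    -- N is a nearest-point map onto S:
    (N : X → X) (hN_mem : ∀ x : X, N x ∈ S)
    (hN_id : ∀ x ∈ S, N x = x)
    (hN_min : ∀ y : X, ∀ s ∈ S, dist y (N y) ≤ dist y s)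
    -- ρ' is the extension formula:
    (ρ' : X → X → ℝ)
    (hρ' : ∀ x y : X,
      ρ' x y = max (max (2 * D * dist x (N x)) (2 * D * dist y (N y))) (ρ (N x) (N y)))    :
    ∀ x y : X, (D / (D + 1)) * dist x y ≤ ρ' x y := by
  intro x y
  have hD0 : (0:ℝ) < D := lt_of_lt_of_le one_pos hD
  set M := ρ' x y with hM
  have hx := hρ' x y
  have ha : 2 * D * dist x (N x) ≤ M := by
    rw [hM, hx]; exact le_max_of_le_left (le_max_left _ _)
  have hb : 2 * D * dist y (N y) ≤ M := by
    rw [hM, hx]; exact le_max_of_le_left (le_max_right _ _)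
  have hr : ρ (N x) (N y) ≤ M := by rw [hM, hx]; exact le_max_right _ _
  have hdr : dist (N x) (N y) ≤ ρ (N x) (N y) :=
    hρ_lower _ (hN_mem x) _ (hN_mem y)
  have htri : dist x y ≤ dist x (N x) + dist (N x) (N y) + dist y (N y) := by
    calc dist x y ≤ dist x (N y) + dist (N y) y := dist_triangle _ _ _
      _ ≤ (dist x (N x) + dist (N x) (N y)) + dist (N y) y :=
        add_le_add_left (dist_triangle _ _ _) _
      _ = dist x (N x) + dist (N x) (N y) + dist y (N y) := by
        rw [dist_comm (N y) y]
  rw [div_mul_eq_mul_div, div_le_iff₀ (by linarith)]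
  nlinarith [dist_nonneg (x := x) (y := N x), dist_nonneg (x := y) (y := N y),
    hdr.trans hr]
end

section
/- Let (X,d) be a metric space, S ⊆ X a nonempty subset, D ≥ 1 a real number, ρ : S × S → [0,∞) an ultrametric on S satisfying d(x,y) ≤ ρ(x,y) ≤ D·d(x,y) for all x,y ∈ S, and N : X → S a nearest-point map. Define ρ̄(x,y) = max{2D·d(x,N(x)), 2D·d(y,N(y)), ρ(N(x),N(y))}. Then ρ̄(x,y) ≥ (2D/(2D+1))·d(x,y) for all x ∈ S and y ∈ X. -/
/-- Lower bound ρ̄(x,y) ≥ (2D/(2D+1))·d(x,y) for x ∈ S, y ∈ X. -/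
theorem extension_lower_bound_S
    {X : Type*} [MetricSpace X] (S : Set X) (hS : S.Nonempty)
    (D : ℝ) (hD : 1 ≤ D) (ρ : X → X → ℝ)
    -- ρ is a metric on S:
    (hρ_nonneg : ∀ x ∈ S, ∀ y ∈ S, 0 ≤ ρ x y)
    (hρ_eq : ∀ x ∈ S, ∀ y ∈ S, (ρ x y = 0 ↔ x = y))
    (hρ_symm : ∀ x ∈ S, ∀ y ∈ S, ρ x y = ρ y x)
    -- strong triangle inequality on S (so ρ is an ultrametric on S):
    (hρ_ultra : ∀ x ∈ S, ∀ y ∈ S, ∀ z ∈ S, ρ x z ≤ max (ρ x y) (ρ y z))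
    -- ρ is sandwiched between d and D·d on S:
    (hρ_lower : ∀ x ∈ S, ∀ y ∈ S, dist x y ≤ ρ x y)
    (hρ_upper : ∀ x ∈ S, ∀ y ∈ S, ρ x y ≤ D * dist x y)
    -- N is a nearest-point map onto S:
    (N : X → X) (hN_mem : ∀ x : X, N x ∈ S)
    (hN_id : ∀ x ∈ S, N x = x)
    (hN_min : ∀ y : X, ∀ s ∈ S, dist y (N y) ≤ dist y s)
    -- ρ' is the extension formula:
    (ρ' : X → X → ℝ)
    (hρ' : ∀ x y : X,
      ρ' x y = max (max (2 * D * dist x (N x)) (2 * D * dist y (N y))) (ρ (N x) (N y)))    :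
    ∀ x ∈ S, ∀ y : X, (2 * D / (2 * D + 1)) * dist x y ≤ ρ' x y := by
  intro x hx y
  have hNx : N x = x := hN_id x hx
  have hD0 : (0:ℝ) < 2 * D := by linarith
  have hD1 : (0:ℝ) < 2 * D + 1 := by linarith
  set M := ρ' x y with hM
  have hMr : M = max (max (2 * D * dist x (N x)) (2 * D * dist y (N y))) (ρ (N x) (N y)) :=
    hρ' x y
  have hb : 2 * D * dist y (N y) ≤ M := by
    rw [hMr]; exact le_max_of_le_left (le_max_right _ _)
  have ha : ρ x (N y) ≤ M := by
    rw [hMr, hNx]; exact le_max_right _ _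
  have hdxNy : dist x (N y) ≤ ρ x (N y) := hρ_lower x hx (N y) (hN_mem y)
  have htri : dist x y ≤ ρ x (N y) + dist y (N y) := by
    calc dist x y ≤ dist x (N y) + dist (N y) y := dist_triangle _ _ _
    _ ≤ ρ x (N y) + dist y (N y) := by rw [dist_comm (N y) y]; linarith
  have hbM : dist y (N y) ≤ M / (2 * D) := by
    rw [le_div_iff₀ hD0]; linarith
  have : dist x y ≤ M + M / (2 * D) := by linarith
  rw [div_mul_eq_mul_div, div_le_iff₀ hD1]
  have hMnn : 0 ≤ M := le_trans (by positivity) hb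
  have key : M + M / (2 * D) = M * (2 * D + 1) / (2 * D) := by
    field_simp
  calc 2 * D * dist x y ≤ 2 * D * (M + M / (2*D)) := by nlinarith
  _ = M * (2 * D + 1) := by field_simp
end

section
/- Let (X,d) be a metric space, S ⊆ X a nonempty subset, D ≥ 1 a real number, ρ : S × S → [0,∞) an ultrametric on S satisfying d(x,y) ≤ ρ(x,y) ≤ D·d(x,y) for all x,y ∈ S, and N : X → S a nearest-point map. Define ρ̄(x,y) = max{2D·d(x,N(x)), 2D·d(y,N(y)), ρ(N(x),N(y))}. Then ρ̄(x,y) ≤ 2D·d(x,y) for all x ∈ S and y ∈ X. -/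
/-- Upper bound ρ̄(x,y) ≤ 2D·d(x,y) for x ∈ S, y ∈ X. -/
theorem extension_upper_bound_S
    {X : Type*} [MetricSpace X] (S : Set X) (hS : S.Nonempty)
    (D : ℝ) (hD : 1 ≤ D) (ρ : X → X → ℝ)
    -- ρ is a metric on S:
    (hρ_nonneg : ∀ x ∈ S, ∀ y ∈ S, 0 ≤ ρ x y)
    (hρ_eq : ∀ x ∈ S, ∀ y ∈ S, (ρ x y = 0 ↔ x = y))
    (hρ_symm : ∀ x ∈ S, ∀ y ∈ S, ρ x y = ρ y x)
    -- strong triangle inequality on S (so ρ is an ultrametric on S):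
    (hρ_ultra : ∀ x ∈ S, ∀ y ∈ S, ∀ z ∈ S, ρ x z ≤ max (ρ x y) (ρ y z))
    -- ρ is sandwiched between d and D·d on S:
    (hρ_lower : ∀ x ∈ S, ∀ y ∈ S, dist x y ≤ ρ x y)
    (hρ_upper : ∀ x ∈ S, ∀ y ∈ S, ρ x y ≤ D * dist x y)
    -- N is a nearest-point map onto S:
    (N : X → X) (hN_mem : ∀ x : X, N x ∈ S)
    (hN_id : ∀ x ∈ S, N x = x)
    (hN_min : ∀ y : X, ∀ s ∈ S, dist y (N y) ≤ dist y s)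
    -- ρ' is the extension formula:
    (ρ' : X → X → ℝ)
    (hρ' : ∀ x y : X,
      ρ' x y = max (max (2 * D * dist x (N x)) (2 * D * dist y (N y))) (ρ (N x) (N y)))    :
    ∀ x ∈ S, ∀ y : X, ρ' x y ≤ 2 * D * dist x y := by
  intro x hx y
  rw [hρ' x y, hN_id x hx]
  have hD0 : (0:ℝ) ≤ D := le_trans zero_le_one hD
  have hyx : dist y (N y) ≤ dist y x := hN_min y x hx
  have h1 : 2 * D * dist x (N x) ≤ 2 * D * dist x y := by
    rw [hN_id x hx]; simp [mul_nonneg, hD0, dist_nonneg]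
  have h2 : 2 * D * dist y (N y) ≤ 2 * D * dist x y := by
    rw [dist_comm x y]
    exact mul_le_mul_of_nonneg_left hyx (by linarith)
  have h3 : ρ x (N y) ≤ 2 * D * dist x y := by
    calc ρ x (N y) ≤ D * dist x (N y) := hρ_upper x hx (N y) (hN_mem y)
    _ ≤ D * (dist x y + dist y (N y)) :=
        mul_le_mul_of_nonneg_left (dist_triangle x y (N y)) hD0
    _ ≤ D * (dist x y + dist y x) := by nlinarith
    _ = 2 * D * dist x y := by rw [dist_comm y x]; ring
  rw [hN_id x hx] at h1
  exact max_le (max_le h1 h2) h3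
end

section
/- Let D ∈ ℕ with D ≥ 1, let X = {0, 1, ..., 2D+1} ⊆ ℤ with the metric d(x,y) = |x−y|, and let S = {1, 3, ..., 2D+1} ⊆ X be the odd integers in X. Let ρ̄ be any ultrametric on X such that ρ̄(x,y) ≥ d(x,y) for all x ∈ S and y ∈ X. Then there exists i ∈ {0, 1, ..., 2D} with ρ̄(i, i+1) ≥ 2D+1. -/
/-- On `X = {0, 1, …, 2D+1} ⊆ ℤ` with `d(x,y) = |x − y|` and
`S = {1, 3, …, 2D+1}` the odd points of `X`, any ultrametric `ρ̄` on `X` dominating `d` on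
pairs from `S × X` must have `ρ̄(i, i+1) ≥ 2D+1` for some `0 ≤ i ≤ 2D`. -/
theorem ultrametric_large_edge
    (D : ℕ) (hD : 1 ≤ D)
    (X : Set ℤ) (hXdef : X = {n : ℤ | 0 ≤ n ∧ n ≤ 2 * (D : ℤ) + 1})
    (S : Set ℤ) (hSdef : S = {n : ℤ | n ∈ X ∧ Odd n})
    (ρ' : ℤ → ℤ → ℝ)
    -- ρ' is an ultrametric on X:
    (hρ'_nonneg : ∀ x ∈ X, ∀ y ∈ X, 0 ≤ ρ' x y)
    (hρ'_eq : ∀ x ∈ X, ∀ y ∈ X, (ρ' x y = 0 ↔ x = y))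
    (hρ'_symm : ∀ x ∈ X, ∀ y ∈ X, ρ' x y = ρ' y x)
    (hρ'_ultra : ∀ x ∈ X, ∀ y ∈ X, ∀ z ∈ X, ρ' x z ≤ max (ρ' x y) (ρ' y z))
    -- ρ' dominates d on pairs from S × X:
    (hρ'_dom : ∀ x ∈ S, ∀ y ∈ X, ((|x - y| : ℤ) : ℝ) ≤ ρ' x y) :
    ∃ i : ℤ, 0 ≤ i ∧ i ≤ 2 * (D : ℤ) ∧ (2 * (D : ℝ) + 1) ≤ ρ' i (i + 1) := by
  subst hXdef hSdef
  have hmem : ∀ n : ℤ, 0 ≤ n → n ≤ 2 * (D : ℤ) + 1 →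
      n ∈ {n : ℤ | 0 ≤ n ∧ n ≤ 2 * (D : ℤ) + 1} := fun n h1 h2 => ⟨h1, h2⟩
  -- chain lemma
  have chain : ∀ n : ℕ, 1 ≤ n → (n : ℤ) ≤ 2 * (D : ℤ) + 1 →
      ∃ i : ℤ, 0 ≤ i ∧ i + 1 ≤ (n : ℤ) ∧ ρ' 0 (n : ℤ) ≤ ρ' i (i + 1) := by
    intro n
    induction n with
    | zero => intro h; omega
    | succ m ih =>
      intro _ hle
      rcases Nat.eq_zero_or_pos m with hm | hm
      · subst hm
        exact ⟨0, le_refl 0, by norm_num, by norm_num⟩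
      · have hle' : (m : ℤ) ≤ 2 * (D : ℤ) + 1 := by push_cast at hle ⊢; omega
        obtain ⟨i, hi0, hi1, hib⟩ := ih hm hle'
        have h0X := hmem 0 (by omega) (by omega)
        have hmX := hmem (m : ℤ) (by positivity) hle'
        have hm1X := hmem ((m : ℤ) + 1) (by positivity) (by push_cast at hle ⊢; omega)
        have htri := hρ'_ultra 0 h0X (m : ℤ) hmX ((m : ℤ) + 1) hm1X
        rcases le_max_iff.mp htri with h | h
        · exact ⟨i, hi0, by omega, by push_cast; linarith⟩
        · exact ⟨(m : ℤ), by positivity, by push_cast; omega, by push_cast; linarith⟩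
  obtain ⟨i, hi0, hi1, hib⟩ := chain (2 * D + 1) (by omega) (by push_cast; omega)
  refine ⟨i, hi0, by push_cast at hi1; omega, ?_⟩
  -- ρ' 0 (2D+1) ≥ 2D+1
  have h0X := hmem 0 (by omega) (by omega)
  have htX := hmem (2 * (D : ℤ) + 1) (by omega) (by omega)
  have htS : (2 * (D : ℤ) + 1) ∈ {n : ℤ | n ∈ {n : ℤ | 0 ≤ n ∧ n ≤ 2 * (D : ℤ) + 1} ∧ Odd n} :=
    ⟨htX, ⟨D, by ring⟩⟩
  have hdom := hρ'_dom _ htS 0 h0X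
  have habs : |2 * (D : ℤ) + 1 - 0| = 2 * (D : ℤ) + 1 := by
    rw [abs_of_nonneg] <;> omega
  rw [habs] at hdom
  have hsymm := hρ'_symm _ htS.1 0 h0X
  have : (2 * (D : ℝ) + 1) ≤ ρ' 0 (2 * (D : ℤ) + 1) := by
    rw [← hsymm]; push_cast at hdom; linarith
  have : (2 * (D : ℝ) + 1) ≤ ρ' 0 ((2 * D + 1 : ℕ) : ℤ) := by push_cast; push_cast at this; exact this
  linarith
end

section
/- Let D ∈ ℕ with D ≥ 1, let X = {0, 1, ..., 2D+1} ⊆ ℤ with the metric d(x,y) = |x−y|, and let S = {1, 3, ..., 2D+1} ⊆ X be the odd integers in X. Let ρ̄ be any ultrametric on X such that ρ̄(x,y) ≥ d(x,y) for all x ∈ S and y ∈ X. Then there exist x ∈ S and y ∈ X with ρ̄(x,y) ≥ (2D+1)·d(x,y) and d(x,y) > 0; in particular, ρ̄ cannot D'-approximate d on pairs from S × X for any D' < 2D+1. -/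
/-- On `X = {0, 1, …, 2D+1} ⊆ ℤ` with `d(x,y) = |x − y|` and
`S = {1, 3, …, 2D+1}` the odd points of `X`, any ultrametric `ρ̄` on `X` dominating `d` on
pairs from `S × X` has a pair `x ∈ S`, `y ∈ X` with `ρ̄(x,y) ≥ (2D+1)·d(x,y)` and
`d(x,y) > 0`; in particular `ρ̄` cannot `D'`-approximate `d` on `S × X` for any
`D' < 2D+1`. -/
theorem ultrametric_distortion_lower_bound
    (D : ℕ) (hD : 1 ≤ D)
    (X : Set ℤ) (hXdef : X = {n : ℤ | 0 ≤ n ∧ n ≤ 2 * (D : ℤ) + 1})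
    (S : Set ℤ) (hSdef : S = {n : ℤ | n ∈ X ∧ Odd n})
    (ρ' : ℤ → ℤ → ℝ)
    -- ρ' is an ultrametric on X:
    (hρ'_nonneg : ∀ x ∈ X, ∀ y ∈ X, 0 ≤ ρ' x y)
    (hρ'_eq : ∀ x ∈ X, ∀ y ∈ X, (ρ' x y = 0 ↔ x = y))
    (hρ'_symm : ∀ x ∈ X, ∀ y ∈ X, ρ' x y = ρ' y x)
    (hρ'_ultra : ∀ x ∈ X, ∀ y ∈ X, ∀ z ∈ X, ρ' x z ≤ max (ρ' x y) (ρ' y z))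
    -- ρ' dominates d on pairs from S × X:
    (hρ'_dom : ∀ x ∈ S, ∀ y ∈ X, ((|x - y| : ℤ) : ℝ) ≤ ρ' x y) :
    (∃ x ∈ S, ∃ y ∈ X,
        (2 * (D : ℝ) + 1) * ((|x - y| : ℤ) : ℝ) ≤ ρ' x y ∧ (0 : ℝ) < ((|x - y| : ℤ) : ℝ)) ∧
      ∀ D' : ℝ, D' < 2 * (D : ℝ) + 1 →
        ¬ ∃ c : ℝ, 0 < c ∧ ∀ x ∈ S, ∀ y ∈ X,
            ((|x - y| : ℤ) : ℝ) ≤ c * ρ' x y ∧ c * ρ' x y ≤ D' * ((|x - y| : ℤ) : ℝ) := by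
  subst hXdef; subst hSdef
  set M : ℤ := 2 * (D : ℤ) + 1 with hM
  have hMX : M ∈ {n : ℤ | 0 ≤ n ∧ n ≤ 2 * (D : ℤ) + 1} := ⟨by omega, by omega⟩
  have h0X : (0:ℤ) ∈ {n : ℤ | 0 ≤ n ∧ n ≤ 2 * (D : ℤ) + 1} := ⟨le_refl _, by positivity⟩
  have hMS : M ∈ {n : ℤ | n ∈ {n : ℤ | 0 ≤ n ∧ n ≤ 2 * (D : ℤ) + 1} ∧ Odd n} :=
    ⟨hMX, ⟨D, by omega⟩⟩
  -- chain lemma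
  have key : ∀ n : ℕ, 1 ≤ n → (n : ℤ) ≤ M →
      ∃ i : ℤ, 0 ≤ i ∧ i + 1 ≤ (n : ℤ) ∧ ρ' 0 (n : ℤ) ≤ ρ' i (i + 1) := by
    intro n
    induction n with
    | zero => intro h; omega
    | succ m ih =>
      intro _ hle
      rcases Nat.eq_zero_or_pos m with hm0 | hm1
      · subst hm0
        exact ⟨0, le_refl _, by norm_num, by norm_num⟩
      · have hmle : (m : ℤ) ≤ M := by push_cast at hle ⊢; omega
        obtain ⟨i, hi0, hi1, hρi⟩ := ih hm1 hmle
        have hmem1 : (m : ℤ) ∈ {n : ℤ | 0 ≤ n ∧ n ≤ 2 * (D : ℤ) + 1} :=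
          ⟨by positivity, by omega⟩
        have hmem2 : ((m : ℤ) + 1) ∈ {n : ℤ | 0 ≤ n ∧ n ≤ 2 * (D : ℤ) + 1} :=
          ⟨by positivity, by push_cast at hle; omega⟩
        have hu := hρ'_ultra 0 h0X (m : ℤ) hmem1 ((m : ℤ) + 1) hmem2
        rcases le_max_iff.mp hu with h | h
        · exact ⟨i, hi0, by push_cast; omega, by push_cast at h ⊢; linarith⟩
        · exact ⟨(m : ℤ), by positivity, by push_cast; exact le_refl _, by push_cast at h ⊢; linarith⟩
  have hMnat : ((2 * D + 1 : ℕ) : ℤ) = M := by push_cast; ring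
  obtain ⟨i, hi0, hi1, hρi⟩ := key (2 * D + 1) (by omega) (by rw [hMnat])
  rw [hMnat] at hρi hi1
  -- ρ' 0 M ≥ M
  have hdom : (M : ℝ) ≤ ρ' M 0 := by
    have := hρ'_dom M hMS 0 h0X
    simpa [abs_of_nonneg (show (0:ℤ) ≤ M by omega)] using this
  have hsy : ρ' 0 M = ρ' M 0 := hρ'_symm 0 h0X M hMX
  have hbig : (2 * (D : ℝ) + 1) ≤ ρ' i (i + 1) := by
    have hMcast : ((M : ℤ) : ℝ) = 2 * (D : ℝ) + 1 := by rw [hM]; push_cast; ring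
    rw [← hMcast]; linarith [hsy ▸ hρi]
  have hiX : i ∈ {n : ℤ | 0 ≤ n ∧ n ≤ 2 * (D : ℤ) + 1} := ⟨hi0, by omega⟩
  have hi1X : (i + 1) ∈ {n : ℤ | 0 ≤ n ∧ n ≤ 2 * (D : ℤ) + 1} := ⟨by omega, by omega⟩
  -- pick the odd endpoint
  obtain ⟨x, y, hxS, hyX, hxy1, hρxy⟩ :
      ∃ x y : ℤ, x ∈ {n : ℤ | n ∈ {n : ℤ | 0 ≤ n ∧ n ≤ 2 * (D : ℤ) + 1} ∧ Odd n} ∧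
        y ∈ {n : ℤ | 0 ≤ n ∧ n ≤ 2 * (D : ℤ) + 1} ∧ |x - y| = 1 ∧ ρ' x y = ρ' i (i + 1) := by
    rcases Int.even_or_odd i with he | ho
    · exact ⟨i + 1, i, ⟨hi1X, by rcases he with ⟨k, hk⟩; exact ⟨k, by omega⟩⟩, hiX,
        by rw [show i + 1 - i = 1 by ring]; exact abs_one, (hρ'_symm i hiX (i + 1) hi1X).symm⟩
    · exact ⟨i, i + 1, ⟨hiX, ho⟩, hi1X, by rw [show i - (i + 1) = -1 by ring]; norm_num, rfl⟩
  have habs : ((|x - y| : ℤ) : ℝ) = 1 := by rw [hxy1]; norm_num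
  constructor
  · exact ⟨x, hxS, y, hyX, by rw [habs, hρxy]; simpa using hbig, by rw [habs]; norm_num⟩
  · rintro D' hD' ⟨c, hc, h⟩
    have h1 := (h M hMS 0 h0X).1
    have h2 := (h x hxS y hyX).2
    rw [habs] at h2
    have hMρ : ((M : ℤ) : ℝ) ≤ c * ρ' M 0 := by
      simpa [abs_of_nonneg (show (0:ℤ) ≤ M by omega)] using h1
    have hmono : c * ρ' M 0 ≤ c * ρ' x y := by
      rw [hρxy]; exact mul_le_mul_of_nonneg_left (by linarith [hsy ▸ hρi]) hc.le
    have hMcast : ((M : ℤ) : ℝ) = 2 * (D : ℝ) + 1 := by rw [hM]; push_cast; ring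
    linarith
end
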